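/- arXiv:2605.19709 — 3 statements merged into one kernel-verified Lean document; each statement's English description precedes it below -/
import Mathlib

section
/- Let Σ be a finite alphabet and let (A_i, B_i) ∈ ℝ^{n×n} × ℝ^{n×m} for i ∈ Σ. The discrete-time control switched system x(k+1) = A_{σ(k)} x(k) + B_{σ(k)} u(k) is mode-independent feedback stabilizable (IFS) if and only if it is current-mode-independent memory-feedback stabilizable (IFS_m). -/
open Matrix Filter ENNReal

noncomputable section

/-- State history `[x(k), …, x(0)]` of the closed loop driven by the reversed
mode list `[i_{k-1}, …, i_0]`, under a current-mode-independent memory controller `Ψ`. -/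
def memHist {n m : ℕ} {S : Type*} (A : S → Matrix (Fin n) (Fin n) ℝ)
    (B : S → Matrix (Fin n) (Fin m) ℝ)
    (Ψ : List (EuclideanSpace ℝ (Fin n)) → List S → EuclideanSpace ℝ (Fin m))
    (x0 : EuclideanSpace ℝ (Fin n)) : List S → List (EuclideanSpace ℝ (Fin n))
  | [] => [x0]
  | i :: is =>
      (WithLp.toLp 2 ((A i).mulVec ((memHist A B Ψ x0 is).headD 0) +
        (B i).mulVec (Ψ (memHist A B Ψ x0 is) is))) :: memHist A B Ψ x0 is

/-- Closed-loop solution `φ(k, σ, x0, Ψ)` under the switching signal `σ`: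
at each step, `Ψ` receives the current and past states `(x(k), …, x(0))`
and the past modes `(σ(k-1), …, σ(0))`. -/
def memTraj {n m : ℕ} {S : Type*} (A : S → Matrix (Fin n) (Fin n) ℝ)
    (B : S → Matrix (Fin n) (Fin m) ℝ)
    (Ψ : List (EuclideanSpace ℝ (Fin n)) → List S → EuclideanSpace ℝ (Fin m))
    (x0 : EuclideanSpace ℝ (Fin n)) (σ : ℕ → S) (k : ℕ) : EuclideanSpace ℝ (Fin n) :=
  (memHist A B Ψ x0 (((List.range k).reverse).map σ)).headD 0

section Aux

variable {n m : ℕ} {S : Type*} (A : S → Matrix (Fin n) (Fin n) ℝ)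
    (B : S → Matrix (Fin n) (Fin m) ℝ)

lemma memHist_ne_nil (Ψ : List (EuclideanSpace ℝ (Fin n)) → List S → EuclideanSpace ℝ (Fin m))
    (x0 : EuclideanSpace ℝ (Fin n)) (L : List S) : memHist A B Ψ x0 L ≠ [] := by
  cases L <;> simp [memHist]

lemma headD_append' {α} (l l' : List α) (d : α) (h : l ≠ []) :
    (l ++ l').headD d = l.headD d := by
  cases l with
  | nil => exact absurd rfl h
  | cons a t => rfl

lemma memTraj_zero (Ψ : List (EuclideanSpace ℝ (Fin n)) → List S → EuclideanSpace ℝ (Fin m))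
    (x0 : EuclideanSpace ℝ (Fin n)) (σ : ℕ → S) : memTraj A B Ψ x0 σ 0 = x0 := by
  simp [memTraj, memHist]

lemma rev_map_succ (σ : ℕ → S) (k : ℕ) :
    ((List.range (k+1)).reverse).map σ = σ k :: ((List.range k).reverse).map σ := by
  simp [List.range_succ]

lemma memTraj_succ (Ψ : List (EuclideanSpace ℝ (Fin n)) → List S → EuclideanSpace ℝ (Fin m))
    (x0 : EuclideanSpace ℝ (Fin n)) (σ : ℕ → S) (k : ℕ) :
    memTraj A B Ψ x0 σ (k+1) =
      (A (σ k)).mulVec (memTraj A B Ψ x0 σ k) +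
      (B (σ k)).mulVec (Ψ (memHist A B Ψ x0 (((List.range k).reverse).map σ))
        (((List.range k).reverse).map σ)) := by
  unfold memTraj
  rw [rev_map_succ]
  rfl

lemma memHist_shift (Ψ : List (EuclideanSpace ℝ (Fin n)) → List S → EuclideanSpace ℝ (Fin m))
    (x : EuclideanSpace ℝ (Fin n)) (i : S) (L : List S) :
    memHist A B Ψ x (L ++ [i]) =
      memHist A B (fun xs is => Ψ (xs ++ [x]) (is ++ [i]))
        (WithLp.toLp 2 ((A i).mulVec x + (B i).mulVec (Ψ [x] []))) L ++ [x] := by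
  induction L with
  | nil => simp [memHist]
  | cons j L' ih =>
      simp only [List.cons_append, memHist, List.append_eq, ih]
      rw [headD_append' _ _ _ (memHist_ne_nil A B _ _ _)]

lemma memTraj_shift (Ψ : List (EuclideanSpace ℝ (Fin n)) → List S → EuclideanSpace ℝ (Fin m))
    (x : EuclideanSpace ℝ (Fin n)) (i : S) (σ : ℕ → S) (k : ℕ) :
    memTraj A B (fun xs is => Ψ (xs ++ [x]) (is ++ [i]))
      (WithLp.toLp 2 ((A i).mulVec x + (B i).mulVec (Ψ [x] []))) σ k =
    memTraj A B Ψ x (fun j => Nat.casesOn j i σ) (k+1) := by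
  have hlist : ((List.range (k+1)).reverse).map (fun j => (Nat.casesOn j i σ : S)) =
      (((List.range k).reverse).map σ) ++ [i] := by
    rw [List.range_succ_eq_map]
    simp only [List.reverse_cons, List.map_append, List.map_reverse, List.map_map,
      List.map_cons, List.map_nil]
    rfl
  unfold memTraj
  rw [hlist, memHist_shift, headD_append' _ _ _ (memHist_ne_nil A B _ _ _)]

end Aux

/-- A switched linear system is mode-independent feedback
stabilizable (IFS) iff it is current-mode-independent memory-feedback stabilizable (IFS_m). -/
theorem ifs_iff_ifs_mem {n m : ℕ} (hn : 0 < n) (hm : 0 < m) {S : Type*} [Fintype S] [Nonempty S]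
    (A : S → Matrix (Fin n) (Fin n) ℝ) (B : S → Matrix (Fin n) (Fin m) ℝ) :
    (∃ M > (0 : ℝ), ∃ γ ∈ Set.Ico (0 : ℝ) 1,
      ∃ Φ : EuclideanSpace ℝ (Fin n) → EuclideanSpace ℝ (Fin m),
        ∀ (x : ℕ → EuclideanSpace ℝ (Fin n)) (σ : ℕ → S),
          (∀ k, x (k + 1) = (A (σ k)).mulVec (x k) + (B (σ k)).mulVec (Φ (x k))) →
          ∀ k, ‖x k‖ ≤ M * γ ^ k * ‖x 0‖) ↔
    (∃ M > (0 : ℝ), ∃ γ ∈ Set.Ico (0 : ℝ) 1,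
      ∃ Ψ : List (EuclideanSpace ℝ (Fin n)) → List S → EuclideanSpace ℝ (Fin m),
        ∀ (x0 : EuclideanSpace ℝ (Fin n)) (σ : ℕ → S) (k : ℕ),
          ‖memTraj A B Ψ x0 σ k‖ ≤ M * γ ^ k * ‖x0‖) := by
  classical
  constructor
  · rintro ⟨M, hM, γ, hγ, Φ, hΦ⟩
    refine ⟨M, hM, γ, hγ, fun xs _ => Φ (xs.headD 0), fun x0 σ k => ?_⟩
    have hrec : ∀ k, memTraj A B (fun xs _ => Φ (xs.headD 0)) x0 σ (k + 1) =
        (A (σ k)).mulVec (memTraj A B (fun xs _ => Φ (xs.headD 0)) x0 σ k) +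
        (B (σ k)).mulVec (Φ (memTraj A B (fun xs _ => Φ (xs.headD 0)) x0 σ k)) := by
      intro k
      rw [memTraj_succ]
      rfl
    have h := hΦ (fun k => memTraj A B (fun xs _ => Φ (xs.headD 0)) x0 σ k) σ hrec k
    simpa [memTraj_zero] using h
  · rintro ⟨M, hM, γ, ⟨hγ0, hγ1⟩, Ψ₀, hΨ₀⟩
    set Sset : EuclideanSpace ℝ (Fin n) → Set ℝ := fun x =>
      {c | 0 ≤ c ∧ ∃ Ψ', ∀ (σ : ℕ → S) (k : ℕ), ‖memTraj A B Ψ' x σ k‖ ≤ c * γ ^ k}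
      with hSset
    set V : EuclideanSpace ℝ (Fin n) → ℝ := fun x => sInf (Sset x) with hV
    have hmemS : ∀ x : EuclideanSpace ℝ (Fin n), M * ‖x‖ ∈ Sset x := by
      intro x
      refine ⟨mul_nonneg hM.le (norm_nonneg _), Ψ₀, fun σ k => ?_⟩
      calc ‖memTraj A B Ψ₀ x σ k‖ ≤ M * γ ^ k * ‖x‖ := hΨ₀ x σ k
        _ = M * ‖x‖ * γ ^ k := by ring
    have hne : ∀ x : EuclideanSpace ℝ (Fin n), (Sset x).Nonempty := fun x => ⟨M * ‖x‖, hmemS x⟩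
    have hbdd : ∀ x : EuclideanSpace ℝ (Fin n), BddBelow (Sset x) := fun x => ⟨0, fun c hc => hc.1⟩
    have hVleM : ∀ x : EuclideanSpace ℝ (Fin n), V x ≤ M * ‖x‖ := fun x => csInf_le (hbdd x) (hmemS x)
    have hnormleV : ∀ x : EuclideanSpace ℝ (Fin n), ‖x‖ ≤ V x := by
      intro x
      refine le_csInf (hne x) (fun c hc => ?_)
      obtain ⟨hc0, Ψ', hΨ'⟩ := hc
      have := hΨ' (fun _ => Classical.arbitrary S) 0
      rw [memTraj_zero] at this
      simpa using this
    have hV0 : ∀ x : EuclideanSpace ℝ (Fin n), 0 ≤ V x := fun x => (norm_nonneg x).trans (hnormleV x)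
    have hVzero : V 0 = 0 := by
      have h1 := hVleM (0 : EuclideanSpace ℝ (Fin n))
      have h2 := hV0 (0 : EuclideanSpace ℝ (Fin n))
      simp only [norm_zero, mul_zero] at h1
      linarith
    -- Bellman inequality
    have hBell : ∀ (x : EuclideanSpace ℝ (Fin n)) (ε : ℝ), 0 < ε → ∃ u : EuclideanSpace ℝ (Fin m),
        ∀ i : S, V (WithLp.toLp 2 ((A i).mulVec x + (B i).mulVec u)) ≤ γ * (V x + ε) := by
      intro x ε hε
      obtain ⟨c, hc, hclt⟩ := exists_lt_of_csInf_lt (hne x) (lt_add_of_pos_right (V x) hε)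
      obtain ⟨hc0, Ψ', hΨ'⟩ := hc
      refine ⟨Ψ' [x] [], fun i => ?_⟩
      have hmem : γ * c ∈ Sset (WithLp.toLp 2 ((A i).mulVec x + (B i).mulVec (Ψ' [x] []))) := by
        refine ⟨mul_nonneg hγ0 hc0, fun xs is => Ψ' (xs ++ [x]) (is ++ [i]), fun σ k => ?_⟩
        rw [memTraj_shift]
        calc ‖memTraj A B Ψ' x (fun j => Nat.casesOn j i σ) (k + 1)‖
            ≤ c * γ ^ (k + 1) := hΨ' _ (k + 1)
          _ = γ * c * γ ^ k := by ring
      calc V (WithLp.toLp 2 ((A i).mulVec x + (B i).mulVec (Ψ' [x] []))) ≤ γ * c := csInf_le (hbdd _) hmem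
        _ ≤ γ * (V x + ε) := mul_le_mul_of_nonneg_left hclt.le hγ0
    set γ' : ℝ := (1 + γ) / 2 with hγ'
    have hγ'0 : 0 ≤ γ' := by simp only [hγ']; linarith
    have hγ'1 : γ' < 1 := by simp only [hγ']; linarith
    have hγγ' : γ < γ' := by simp only [hγ']; linarith
    have hgood : ∀ x : EuclideanSpace ℝ (Fin n), ∃ u : EuclideanSpace ℝ (Fin m),
        ∀ i : S, V (WithLp.toLp 2 ((A i).mulVec x + (B i).mulVec u)) ≤ γ' * V x := by
      intro x
      by_cases hx : x = 0
      · refine ⟨0, fun i => ?_⟩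
        subst hx
        have : WithLp.toLp 2 ((A i).mulVec (0 : EuclideanSpace ℝ (Fin n)) + (B i).mulVec (0 : EuclideanSpace ℝ (Fin m))) = 0 := by
          ext j
          simp [Matrix.mulVec_zero]
        rw [this, hVzero, mul_zero]
      · rcases eq_or_lt_of_le hγ0 with hγz | hγp
        · obtain ⟨u, hu⟩ := hBell x 1 one_pos
          refine ⟨u, fun i => (hu i).trans ?_⟩
          rw [← hγz, zero_mul]
          exact mul_nonneg hγ'0 (hV0 x)
        · have hVx : 0 < V x := lt_of_lt_of_le (norm_pos_iff.mpr hx) (hnormleV x)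
          have hεpos : 0 < (γ' - γ) * V x / γ := by
            apply div_pos (mul_pos (by linarith) hVx) hγp
          obtain ⟨u, hu⟩ := hBell x _ hεpos
          refine ⟨u, fun i => (hu i).trans (le_of_eq ?_)⟩
          field_simp
          ring
    choose Φ hΦ using hgood
    refine ⟨M, hM, γ', ⟨hγ'0, hγ'1⟩, Φ, fun x σ hrec k => ?_⟩
    have key : ∀ k, V (x k) ≤ γ' ^ k * V (x 0) := by
      intro k
      induction k with
      | zero => simp
      | succ k ih =>
          rw [show x (k + 1) = WithLp.toLp 2 ((A (σ k)).mulVec (x k) + (B (σ k)).mulVec (Φ (x k))) from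
            congrArg (WithLp.toLp 2) (hrec k)]
          calc V (WithLp.toLp 2 ((A (σ k)).mulVec (x k) + (B (σ k)).mulVec (Φ (x k))))
              ≤ γ' * V (x k) := hΦ (x k) (σ k)
            _ ≤ γ' * (γ' ^ k * V (x 0)) := mul_le_mul_of_nonneg_left ih hγ'0
            _ = γ' ^ (k + 1) * V (x 0) := by ring
    calc ‖x k‖ ≤ V (x k) := hnormleV _
      _ ≤ γ' ^ k * V (x 0) := key k
      _ ≤ γ' ^ k * (M * ‖x 0‖) := mul_le_mul_of_nonneg_left (hVleM _) (pow_nonneg hγ'0 k)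
      _ = M * γ' ^ k * ‖x 0‖ := by ring
end
end

section
/- Suppose there exist C > 1, γ ∈ [0,1) and a current-mode-independent memory controller Ψ such that ‖φ(k, σ, x₀, Ψ)‖ ≤ C γ^k ‖x₀‖ for all x₀, σ, k. Then the value function V(x₀) = inf over memory controllers Ψ' of sup over σ of Σ_{k=0}^∞ ‖φ(k, σ, x₀, Ψ')‖ is a norm on ℝⁿ: it is positive definite, absolutely homogeneous of degree one, and subadditive. Consequently, V is convex and continuous on ℝⁿ. -/
open Matrix Filter ENNReal

noncomputable section

/-- The value function `V(x₀) = inf_Ψ sup_σ Σₖ ‖φ(k, σ, x₀, Ψ)‖`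
(computed in `ℝ≥0∞` and converted to a real number). -/
def valFun {n m : ℕ} {S : Type*} (A : S → Matrix (Fin n) (Fin n) ℝ)
    (B : S → Matrix (Fin n) (Fin m) ℝ) (x0 : EuclideanSpace ℝ (Fin n)) : ℝ :=
  (⨅ Ψ : List (EuclideanSpace ℝ (Fin n)) → List S → EuclideanSpace ℝ (Fin m),
    ⨆ σ : ℕ → S, ∑' k : ℕ, (‖memTraj A B Ψ x0 σ k‖₊ : ℝ≥0∞)).toReal

namespace VFAux

variable {n m : ℕ} {S : Type*}

abbrev Ctrl (n m : ℕ) (S : Type*) :=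
  List (EuclideanSpace ℝ (Fin n)) → List S → EuclideanSpace ℝ (Fin m)

def Sfun (A : S → Matrix (Fin n) (Fin n) ℝ) (B : S → Matrix (Fin n) (Fin m) ℝ)
    (Ψ : Ctrl n m S) (x0 : EuclideanSpace ℝ (Fin n)) : ℝ≥0∞ :=
  ⨆ σ : ℕ → S, ∑' k : ℕ, (‖memTraj A B Ψ x0 σ k‖₊ : ℝ≥0∞)

def Ifun (A : S → Matrix (Fin n) (Fin n) ℝ) (B : S → Matrix (Fin n) (Fin m) ℝ)
    (x0 : EuclideanSpace ℝ (Fin n)) : ℝ≥0∞ :=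
  ⨅ Ψ : Ctrl n m S, Sfun A B Ψ x0

lemma valFun_eq (A : S → Matrix (Fin n) (Fin n) ℝ) (B : S → Matrix (Fin n) (Fin m) ℝ)
    (x0 : EuclideanSpace ℝ (Fin n)) : valFun A B x0 = (Ifun A B x0).toReal := rfl

lemma memTraj_zero (A : S → Matrix (Fin n) (Fin n) ℝ) (B : S → Matrix (Fin n) (Fin m) ℝ)
    (Ψ : Ctrl n m S) (x0 : EuclideanSpace ℝ (Fin n)) (σ : ℕ → S) :
    memTraj A B Ψ x0 σ 0 = x0 := by
  simp [memTraj, memHist]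

variable (A : S → Matrix (Fin n) (Fin n) ℝ) (B : S → Matrix (Fin n) (Fin m) ℝ)

/-- Upper bound on the cost of an exponentially stabilizing controller. -/
lemma Sfun_le {C γ : ℝ} (hγ0 : 0 ≤ γ) (hγ1 : γ < 1) (Ψ : Ctrl n m S)
    (hΨ : ∀ (x0 : EuclideanSpace ℝ (Fin n)) (σ : ℕ → S) (k : ℕ),
      ‖memTraj A B Ψ x0 σ k‖ ≤ C * γ ^ k * ‖x0‖) (x0 : EuclideanSpace ℝ (Fin n)) :
    Sfun A B Ψ x0 ≤ ENNReal.ofReal (C * ‖x0‖ * (1 - γ)⁻¹) := by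
  refine iSup_le fun σ => ?_
  have hnn : ∀ k : ℕ, (0 : ℝ) ≤ C * γ ^ k * ‖x0‖ :=
    fun k => le_trans (norm_nonneg _) (hΨ x0 σ k)
  have hsum : Summable (fun k : ℕ => C * γ ^ k * ‖x0‖) := by
    refine ((summable_geometric_of_lt_one hγ0 hγ1).mul_left (C * ‖x0‖)).congr fun k => by ring
  calc ∑' k : ℕ, (‖memTraj A B Ψ x0 σ k‖₊ : ℝ≥0∞)
      ≤ ∑' k : ℕ, ENNReal.ofReal (C * γ ^ k * ‖x0‖) := by
        refine ENNReal.tsum_le_tsum fun k => ?_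
        rw [← enorm_eq_nnnorm, ← ofReal_norm]
        exact ENNReal.ofReal_le_ofReal (hΨ x0 σ k)
    _ = ENNReal.ofReal (∑' k : ℕ, C * γ ^ k * ‖x0‖) :=
        (ENNReal.ofReal_tsum_of_nonneg hnn hsum).symm
    _ = ENNReal.ofReal (C * ‖x0‖ * (1 - γ)⁻¹) := by
        congr 1
        have h1 : ∀ k : ℕ, C * γ ^ k * ‖x0‖ = (C * ‖x0‖) * γ ^ k := fun k => by ring
        rw [tsum_congr h1, tsum_mul_left, tsum_geometric_of_lt_one hγ0 hγ1]

lemma norm_le_Sfun [Nonempty S] (Ψ : Ctrl n m S) (x0 : EuclideanSpace ℝ (Fin n)) :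
    ENNReal.ofReal ‖x0‖ ≤ Sfun A B Ψ x0 := by
  refine le_iSup_of_le (Classical.arbitrary _) ?_
  rw [ofReal_norm, enorm_eq_nnnorm]
  simpa [memTraj_zero] using ENNReal.le_tsum (f := fun k : ℕ => (‖memTraj A B Ψ x0 _ k‖₊ : ℝ≥0∞)) 0

lemma norm_le_Ifun [Nonempty S] (x0 : EuclideanSpace ℝ (Fin n)) :
    ENNReal.ofReal ‖x0‖ ≤ Ifun A B x0 :=
  le_iInf fun Ψ => norm_le_Sfun A B Ψ x0

/-- Scaled controller. -/
def scaleCtrl (lam : ℝ) (Ψ : Ctrl n m S) : Ctrl n m S :=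
  fun xs is => lam • Ψ (xs.map (lam⁻¹ • ·)) is

lemma headD_map_smul (c : ℝ) (l : List (EuclideanSpace ℝ (Fin n))) :
    (l.map (c • ·)).headD 0 = c • l.headD 0 := by
  cases l <;> simp

lemma memHist_scale {lam : ℝ} (hlam : lam ≠ 0) (Ψ : Ctrl n m S)
    (x0 : EuclideanSpace ℝ (Fin n)) (is : List S) :
    memHist A B (scaleCtrl lam Ψ) (lam • x0) is = (memHist A B Ψ x0 is).map (lam • ·) := by
  induction is with
  | nil => simp [memHist]
  | cons i is ih =>
    have hmap : ((memHist A B Ψ x0 is).map (lam • ·)).map (lam⁻¹ • ·) = memHist A B Ψ x0 is := by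
      rw [List.map_map]
      have : ((lam⁻¹ • ·) ∘ (lam • ·) : EuclideanSpace ℝ (Fin n) → _) = id := by
        funext v; simp [smul_smul, inv_mul_cancel₀ hlam]
      rw [this, List.map_id]
    simp only [memHist, ih, scaleCtrl, hmap, headD_map_smul, List.map_cons]
    congr 1
    rw [WithLp.ofLp_smul, WithLp.ofLp_smul, Matrix.mulVec_smul, Matrix.mulVec_smul, ← smul_add,
      WithLp.toLp_smul]

lemma memTraj_scale {lam : ℝ} (hlam : lam ≠ 0) (Ψ : Ctrl n m S)
    (x0 : EuclideanSpace ℝ (Fin n)) (σ : ℕ → S) (k : ℕ) :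
    memTraj A B (scaleCtrl lam Ψ) (lam • x0) σ k = lam • memTraj A B Ψ x0 σ k := by
  rw [memTraj, memHist_scale A B hlam, headD_map_smul, memTraj]

lemma Sfun_scale {lam : ℝ} (hlam : lam ≠ 0) (Ψ : Ctrl n m S) (x0 : EuclideanSpace ℝ (Fin n)) :
    Sfun A B (scaleCtrl lam Ψ) (lam • x0) = (‖lam‖₊ : ℝ≥0∞) * Sfun A B Ψ x0 := by
  rw [Sfun, Sfun, ENNReal.mul_iSup]
  refine iSup_congr fun σ => ?_
  rw [← ENNReal.tsum_mul_left]
  refine tsum_congr fun k => ?_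
  rw [memTraj_scale A B hlam, nnnorm_smul, ENNReal.coe_mul]

lemma Ifun_scale_le {lam : ℝ} (hlam : lam ≠ 0) (x0 : EuclideanSpace ℝ (Fin n)) :
    Ifun A B (lam • x0) ≤ (‖lam‖₊ : ℝ≥0∞) * Ifun A B x0 := by
  show Ifun A B (lam • x0) ≤ (‖lam‖₊ : ℝ≥0∞) * ⨅ Ψ : Ctrl n m S, Sfun A B Ψ x0
  rw [ENNReal.mul_iInf (fun h => absurd h ENNReal.coe_ne_top)]
  refine le_iInf fun Ψ => ?_
  exact iInf_le_of_le (scaleCtrl lam Ψ) (Sfun_scale A B hlam Ψ x0).le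

lemma Ifun_scale {lam : ℝ} (hlam : lam ≠ 0) (x0 : EuclideanSpace ℝ (Fin n)) :
    Ifun A B (lam • x0) = (‖lam‖₊ : ℝ≥0∞) * Ifun A B x0 := by
  refine le_antisymm (Ifun_scale_le A B hlam x0) ?_
  have h1 : Ifun A B x0 ≤ (‖lam⁻¹‖₊ : ℝ≥0∞) * Ifun A B (lam • x0) := by
    have := Ifun_scale_le A B (lam := lam⁻¹) (inv_ne_zero hlam) (lam • x0)
    rwa [smul_smul, inv_mul_cancel₀ hlam, one_smul] at this
  have hmul : (‖lam‖₊ : ℝ≥0∞) * (‖lam⁻¹‖₊ : ℝ≥0∞) = 1 := by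
    rw [← ENNReal.coe_mul, ← nnnorm_mul, mul_inv_cancel₀ hlam]
    simp
  calc (‖lam‖₊ : ℝ≥0∞) * Ifun A B x0
      ≤ (‖lam‖₊ : ℝ≥0∞) * ((‖lam⁻¹‖₊ : ℝ≥0∞) * Ifun A B (lam • x0)) :=
        mul_le_mul_right h1 _
    _ = Ifun A B (lam • x0) := by rw [← mul_assoc, hmul, one_mul]

/-- Parallel sum controller. -/
def addCtrl (Ψ₁ Ψ₂ : Ctrl n m S) (x y : EuclideanSpace ℝ (Fin n)) : Ctrl n m S :=
  fun _ is => Ψ₁ (memHist A B Ψ₁ x is) is + Ψ₂ (memHist A B Ψ₂ y is) is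

lemma mulVec_add' {p : ℕ} (M : Matrix (Fin n) (Fin p) ℝ) (a b : EuclideanSpace ℝ (Fin p)) :
    M.mulVec (a + b) = M.mulVec a + M.mulVec b :=
  Matrix.mulVec_add M a b

lemma memHist_add (Ψ₁ Ψ₂ : Ctrl n m S) (x y : EuclideanSpace ℝ (Fin n)) (is : List S) :
    (memHist A B (addCtrl A B Ψ₁ Ψ₂ x y) (x + y) is).headD 0 =
      (memHist A B Ψ₁ x is).headD 0 + (memHist A B Ψ₂ y is).headD 0 := by
  induction is with
  | nil => simp [memHist]
  | cons i is ih =>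
    simp only [memHist, List.headD_cons, addCtrl, ih, mulVec_add', WithLp.ofLp_add, Matrix.mulVec_add,
      WithLp.toLp_add]
    abel

lemma memTraj_add (Ψ₁ Ψ₂ : Ctrl n m S) (x y : EuclideanSpace ℝ (Fin n)) (σ : ℕ → S) (k : ℕ) :
    memTraj A B (addCtrl A B Ψ₁ Ψ₂ x y) (x + y) σ k =
      memTraj A B Ψ₁ x σ k + memTraj A B Ψ₂ y σ k := by
  rw [memTraj, memTraj, memTraj, memHist_add]

lemma Sfun_add (Ψ₁ Ψ₂ : Ctrl n m S) (x y : EuclideanSpace ℝ (Fin n)) :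
    Sfun A B (addCtrl A B Ψ₁ Ψ₂ x y) (x + y) ≤ Sfun A B Ψ₁ x + Sfun A B Ψ₂ y := by
  refine iSup_le fun σ => ?_
  calc ∑' k : ℕ, (‖memTraj A B (addCtrl A B Ψ₁ Ψ₂ x y) (x + y) σ k‖₊ : ℝ≥0∞)
      ≤ ∑' k : ℕ, ((‖memTraj A B Ψ₁ x σ k‖₊ : ℝ≥0∞) + (‖memTraj A B Ψ₂ y σ k‖₊ : ℝ≥0∞)) := by
        refine ENNReal.tsum_le_tsum fun k => ?_
        rw [memTraj_add, ← ENNReal.coe_add]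
        exact_mod_cast nnnorm_add_le _ _
    _ = (∑' k : ℕ, (‖memTraj A B Ψ₁ x σ k‖₊ : ℝ≥0∞)) +
          ∑' k : ℕ, (‖memTraj A B Ψ₂ y σ k‖₊ : ℝ≥0∞) := ENNReal.tsum_add
    _ ≤ Sfun A B Ψ₁ x + Sfun A B Ψ₂ y := by
        unfold Sfun
        exact add_le_add
          (le_iSup (fun σ' => ∑' k : ℕ, (‖memTraj A B Ψ₁ x σ' k‖₊ : ℝ≥0∞)) σ)
          (le_iSup (fun σ' => ∑' k : ℕ, (‖memTraj A B Ψ₂ y σ' k‖₊ : ℝ≥0∞)) σ)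

lemma Ifun_add (x y : EuclideanSpace ℝ (Fin n)) :
    Ifun A B (x + y) ≤ Ifun A B x + Ifun A B y := by
  show Ifun A B (x + y) ≤ (⨅ Ψ : Ctrl n m S, Sfun A B Ψ x) + ⨅ Ψ : Ctrl n m S, Sfun A B Ψ y
  rw [ENNReal.iInf_add]
  refine le_iInf fun Ψ₁ => ?_
  rw [ENNReal.add_iInf]
  refine le_iInf fun Ψ₂ => ?_
  exact iInf_le_of_le (addCtrl A B Ψ₁ Ψ₂ x y) (Sfun_add A B Ψ₁ Ψ₂ x y)

end VFAux

/-- Under exponential stabilizability by a memory controller,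
the value function is a norm on `ℝⁿ` (positive definite, absolutely homogeneous of
degree one, subadditive); consequently it is convex and continuous. -/
theorem valFun_is_norm {n m : ℕ} (hn : 0 < n) (hm : 0 < m) {S : Type*} [Fintype S] [Nonempty S]
    (A : S → Matrix (Fin n) (Fin n) ℝ) (B : S → Matrix (Fin n) (Fin m) ℝ)
    (C γ : ℝ) (hC : 1 < C) (hγ : γ ∈ Set.Ico (0 : ℝ) 1)
    (Ψ : List (EuclideanSpace ℝ (Fin n)) → List S → EuclideanSpace ℝ (Fin m))
    (hΨ : ∀ (x0 : EuclideanSpace ℝ (Fin n)) (σ : ℕ → S) (k : ℕ),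
      ‖memTraj A B Ψ x0 σ k‖ ≤ C * γ ^ k * ‖x0‖) :
    ((valFun A B (0 : EuclideanSpace ℝ (Fin n)) = 0 ∧
        ∀ x : EuclideanSpace ℝ (Fin n), x ≠ 0 → 0 < valFun A B x) ∧
      (∀ (lam : ℝ) (x : EuclideanSpace ℝ (Fin n)),
        valFun A B (lam • x) = |lam| * valFun A B x) ∧
      (∀ x y : EuclideanSpace ℝ (Fin n),
        valFun A B (x + y) ≤ valFun A B x + valFun A B y)) ∧
    ConvexOn ℝ Set.univ (valFun A B) ∧ Continuous (valFun A B) := by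
  obtain ⟨hγ0, hγ1⟩ := hγ
  have hγpos : (0 : ℝ) < 1 - γ := by linarith
  have hCpos : (0 : ℝ) < C := by linarith
  have hIle : ∀ x : EuclideanSpace ℝ (Fin n),
      VFAux.Ifun A B x ≤ ENNReal.ofReal (C * ‖x‖ * (1 - γ)⁻¹) :=
    fun x => iInf_le_of_le Ψ (VFAux.Sfun_le A B hγ0 hγ1 Ψ hΨ x)
  have hfin : ∀ x : EuclideanSpace ℝ (Fin n), VFAux.Ifun A B x ≠ ⊤ :=
    fun x => ((hIle x).trans_lt ENNReal.ofReal_lt_top).ne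
  have hVle : ∀ x : EuclideanSpace ℝ (Fin n), valFun A B x ≤ C * ‖x‖ * (1 - γ)⁻¹ := by
    intro x
    rw [VFAux.valFun_eq]
    have h := ENNReal.toReal_mono ENNReal.ofReal_ne_top (hIle x)
    rwa [ENNReal.toReal_ofReal (by positivity)] at h
  have hVge : ∀ x : EuclideanSpace ℝ (Fin n), ‖x‖ ≤ valFun A B x := by
    intro x
    rw [VFAux.valFun_eq]
    have h := ENNReal.toReal_mono (hfin x) (VFAux.norm_le_Ifun A B x)
    rwa [ENNReal.toReal_ofReal (norm_nonneg x)] at h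
  have hV0 : valFun A B (0 : EuclideanSpace ℝ (Fin n)) = 0 := by
    have h0 : VFAux.Ifun A B (0 : EuclideanSpace ℝ (Fin n)) = 0 := by
      refine le_antisymm ?_ zero_le
      simpa using hIle 0
    rw [VFAux.valFun_eq, h0, ENNReal.toReal_zero]
  have hhomog : ∀ (lam : ℝ) (x : EuclideanSpace ℝ (Fin n)),
      valFun A B (lam • x) = |lam| * valFun A B x := by
    intro lam x
    rcases eq_or_ne lam 0 with rfl | hlam
    · simp [hV0]
    · rw [VFAux.valFun_eq, VFAux.Ifun_scale A B hlam, ENNReal.toReal_mul, ENNReal.coe_toReal,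
        coe_nnnorm, Real.norm_eq_abs, VFAux.valFun_eq]
  have hsub : ∀ x y : EuclideanSpace ℝ (Fin n),
      valFun A B (x + y) ≤ valFun A B x + valFun A B y := by
    intro x y
    rw [VFAux.valFun_eq, VFAux.valFun_eq, VFAux.valFun_eq,
      ← ENNReal.toReal_add (hfin x) (hfin y)]
    exact ENNReal.toReal_mono (ENNReal.add_ne_top.2 ⟨hfin x, hfin y⟩) (VFAux.Ifun_add A B x y)
  have key : ∀ x y : EuclideanSpace ℝ (Fin n),
      valFun A B x - valFun A B y ≤ C * (1 - γ)⁻¹ * ‖x - y‖ := by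
    intro x y
    have h1 : valFun A B x ≤ valFun A B (x - y) + valFun A B y := by
      have := hsub (x - y) y
      rwa [sub_add_cancel] at this
    have h2 := hVle (x - y)
    have h3 : C * ‖x - y‖ * (1 - γ)⁻¹ = C * (1 - γ)⁻¹ * ‖x - y‖ := by ring
    linarith
  refine ⟨⟨⟨hV0, fun x hx => lt_of_lt_of_le (norm_pos_iff.2 hx) (hVge x)⟩, hhomog, hsub⟩, ?_, ?_⟩
  · refine ⟨convex_univ, fun x _ y _ a b ha hb hab => ?_⟩
    calc valFun A B (a • x + b • y)
        ≤ valFun A B (a • x) + valFun A B (b • y) := hsub _ _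
      _ = a * valFun A B x + b * valFun A B y := by
          rw [hhomog, hhomog, abs_of_nonneg ha, abs_of_nonneg hb]
      _ = a • valFun A B x + b • valFun A B y := by simp [smul_eq_mul]
  · have hL : LipschitzWith (Real.toNNReal (C * (1 - γ)⁻¹)) (valFun A B) := by
      refine LipschitzWith.of_dist_le_mul fun x y => ?_
      rw [Real.dist_eq, dist_eq_norm,
        Real.coe_toNNReal _ (by positivity : (0 : ℝ) ≤ C * (1 - γ)⁻¹)]
      rw [abs_sub_le_iff]
      exact ⟨key x y, by simpa [norm_sub_rev x y] using key y x⟩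
    exact hL.continuous
end
end

section
/- Let Σ be a finite alphabet, (A_i, B_i) ∈ ℝ^{n×n} × ℝ^{n×m} for i ∈ Σ, and let V : ℝⁿ → ℝ be any norm on ℝⁿ. Then for every x ∈ ℝⁿ, the function W(u) = max_{i ∈ Σ} V(A_i x + B_i u) attains its infimum over u ∈ ℝ^m; that is, there exists u* ∈ ℝ^m with W(u*) = inf_{u ∈ ℝ^m} W(u). -/
open Matrix Filter ENNReal

noncomputable section

/-- For any norm `V` on `ℝⁿ` and any `x`, the function
`W(u) = max_i V(A_i x + B_i u)` attains its infimum over `u ∈ ℝᵐ`. -/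
theorem inf_attained {n m : ℕ} (hn : 0 < n) (hm : 0 < m) {S : Type*} [Fintype S] [Nonempty S]
    (A : S → Matrix (Fin n) (Fin n) ℝ) (B : S → Matrix (Fin n) (Fin m) ℝ)
    (V : EuclideanSpace ℝ (Fin n) → ℝ)
    (hpos : ∀ x : EuclideanSpace ℝ (Fin n), x ≠ 0 → 0 < V x)
    (hhom : ∀ (lam : ℝ) (x : EuclideanSpace ℝ (Fin n)), V (lam • x) = |lam| * V x)
    (hadd : ∀ x y : EuclideanSpace ℝ (Fin n), V (x + y) ≤ V x + V y) :
    ∀ x : EuclideanSpace ℝ (Fin n),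
      ∃ ustar : EuclideanSpace ℝ (Fin m),
        (⨆ i : S, V (WithLp.toLp 2 ((A i).mulVec x + (B i).mulVec ustar))) =
        ⨅ u : EuclideanSpace ℝ (Fin m),
          ⨆ i : S, V (WithLp.toLp 2 ((A i).mulVec x + (B i).mulVec u)) := by
  intro x
  classical
  -- Basic properties of V
  have V0 : V 0 = 0 := by
    have h := hhom 0 0; simpa using h
  have Vnonneg : ∀ y, 0 ≤ V y := by
    intro y
    rcases eq_or_ne y 0 with h | h
    · simp [h, V0]
    · exact (hpos y h).le
  have Vneg : ∀ y, V (-y) = V y := by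
    intro y; have h := hhom (-1) y; simpa using h
  -- finite subadditivity
  have Vsum : ∀ (f : Fin n → EuclideanSpace ℝ (Fin n)) (s : Finset (Fin n)),
      V (∑ i ∈ s, f i) ≤ ∑ i ∈ s, V (f i) := by
    intro f s
    induction s using Finset.cons_induction with
    | empty => simp [V0]
    | cons a s ha ih =>
      rw [Finset.sum_cons, Finset.sum_cons]
      exact (hadd _ _).trans (by linarith)
  -- coordinate bound
  have coord : ∀ (y : EuclideanSpace ℝ (Fin n)) (i : Fin n), |y i| ≤ ‖y‖ := by
    intro y i
    rw [EuclideanSpace.norm_eq]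
    have h1 : |y i| = Real.sqrt (|y i| ^ 2) := by rw [Real.sqrt_sq_eq_abs, abs_abs]
    rw [h1]
    apply Real.sqrt_le_sqrt
    calc |y i| ^ 2 = ‖y i‖ ^ 2 := by rw [Real.norm_eq_abs]
      _ ≤ ∑ j, ‖y j‖ ^ 2 :=
        Finset.single_le_sum (f := fun j => ‖y j‖ ^ 2) (fun j _ => sq_nonneg _)
          (Finset.mem_univ i)
  -- upper bound:  V y ≤ C ‖y‖
  set C : ℝ := ∑ i, V (EuclideanSpace.single i (1 : ℝ)) with hCdef
  have hC0 : 0 ≤ C := Finset.sum_nonneg fun i _ => Vnonneg _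
  have hC : ∀ y : EuclideanSpace ℝ (Fin n), V y ≤ C * ‖y‖ := by
    intro y
    have hy : y = ∑ i, y i • EuclideanSpace.single i (1 : ℝ) := by
      have h := (EuclideanSpace.basisFun (Fin n) ℝ).sum_repr y
      simp only [EuclideanSpace.basisFun_repr, EuclideanSpace.basisFun_apply] at h
      exact h.symm
    calc V y = V (∑ i, y i • EuclideanSpace.single i (1 : ℝ)) := by rw [← hy]
      _ ≤ ∑ i, V (y i • EuclideanSpace.single i (1 : ℝ)) := Vsum _ _
      _ = ∑ i, |y i| * V (EuclideanSpace.single i (1 : ℝ)) := by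
          simp only [hhom]
      _ ≤ ∑ i, ‖y‖ * V (EuclideanSpace.single i (1 : ℝ)) := by
          refine Finset.sum_le_sum fun i _ => ?_
          exact mul_le_mul_of_nonneg_right (coord y i) (Vnonneg _)
      _ = C * ‖y‖ := by rw [← Finset.mul_sum]; ring
  -- V is continuous
  have hVcont : Continuous V := by
    apply (LipschitzWith.of_dist_le_mul (K := Real.toNNReal C) (f := V) ?_).continuous
    intro a b
    rw [Real.coe_toNNReal C hC0, Real.dist_eq, dist_eq_norm]
    rw [abs_sub_le_iff]
    constructor
    · have h1 : V a ≤ V b + V (a - b) := by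
        have := hadd b (a - b); simpa using this
      have := hC (a - b); linarith
    · have h1 : V b ≤ V a + V (b - a) := by
        have := hadd a (b - a); simpa using this
      have h2 : V (b - a) ≤ C * ‖a - b‖ := by
        have := hC (b - a); rwa [← norm_neg, neg_sub] at this
      linarith
  -- lower bound:  c ‖y‖ ≤ V y,  c > 0
  obtain ⟨c, hc0, hc⟩ : ∃ c > 0, ∀ y : EuclideanSpace ℝ (Fin n), c * ‖y‖ ≤ V y := by
    have hne : (Metric.sphere (0 : EuclideanSpace ℝ (Fin n)) 1).Nonempty := by
      refine ⟨EuclideanSpace.single ⟨0, hn⟩ (1 : ℝ), ?_⟩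
      simp [EuclideanSpace.norm_single]
    obtain ⟨y0, hy0mem, hy0min⟩ :=
      (isCompact_sphere (0 : EuclideanSpace ℝ (Fin n)) 1).exists_isMinOn hne
        hVcont.continuousOn
    have hy0norm : ‖y0‖ = 1 := by simpa using hy0mem
    have hy0ne : y0 ≠ 0 := by
      intro h; rw [h] at hy0norm; simp at hy0norm
    refine ⟨V y0, hpos y0 hy0ne, fun y => ?_⟩
    rcases eq_or_ne y 0 with h | h
    · simp [h, V0]
    · have hny : (0 : ℝ) < ‖y‖ := norm_pos_iff.mpr h
      have hmem : ‖y‖⁻¹ • y ∈ Metric.sphere (0 : EuclideanSpace ℝ (Fin n)) 1 := by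
        simp [norm_smul, abs_of_pos (inv_pos.mpr hny), inv_mul_cancel₀ hny.ne']
      have h1 : V y0 ≤ V (‖y‖⁻¹ • y) := hy0min hmem
      rw [hhom, abs_of_pos (inv_pos.mpr hny)] at h1
      calc V y0 * ‖y‖ ≤ (‖y‖⁻¹ * V y) * ‖y‖ :=
            mul_le_mul_of_nonneg_right h1 hny.le
        _ = V y := by field_simp
  -- the linear map  L u = (B i *ᵥ u)_i
  set L : EuclideanSpace ℝ (Fin m) →ₗ[ℝ] (S → EuclideanSpace ℝ (Fin n)) :=
    LinearMap.pi fun i =>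
      (WithLp.linearEquiv 2 ℝ (Fin n → ℝ)).symm.toLinearMap ∘ₗ (B i).mulVecLin ∘ₗ
        (WithLp.linearEquiv 2 ℝ (Fin m → ℝ)).toLinearMap with hLdef
  have hLapp : ∀ (u : EuclideanSpace ℝ (Fin m)) (i : S), L u i = (B i).mulVec u :=
    fun u i => rfl
  -- the function g on the product space
  set a : S → EuclideanSpace ℝ (Fin n) := fun i => WithLp.toLp 2 ((A i).mulVec x) with hadef
  set g : (S → EuclideanSpace ℝ (Fin n)) → ℝ :=
    fun v => ⨆ i : S, V (a i + v i) with hgdef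
  have hgW : ∀ u : EuclideanSpace ℝ (Fin m),
      g (L u) = ⨆ i : S, V (WithLp.toLp 2 ((A i).mulVec x + (B i).mulVec u)) := fun u => rfl
  -- g is continuous
  have hg_sup' : ∀ v, g v = Finset.univ.sup' Finset.univ_nonempty
      (fun i : S => V (a i + v i)) := by
    intro v
    rw [Finset.sup'_univ_eq_ciSup]
  have hgcont : Continuous g := by
    have : Continuous fun v : S → EuclideanSpace ℝ (Fin n) =>
        Finset.univ.sup' Finset.univ_nonempty
          (fun i : S => V (a i + v i)) := by
      apply continuous_iff_continuousAt.mpr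
      intro v
      apply ContinuousAt.finset_sup'_apply Finset.univ_nonempty
      intro i _
      exact (hVcont.comp (continuous_const.add (continuous_apply (A := fun _ : S => EuclideanSpace ℝ (Fin n)) i))).continuousAt
    exact this.congr fun v => (hg_sup' v).symm
  -- basic bounds for g
  have hbdd : ∀ v : S → EuclideanSpace ℝ (Fin n), BddAbove (Set.range fun i : S => V (a i + v i)) :=
    fun v => Set.Finite.bddAbove (Set.finite_range _)
  have hg_nonneg : ∀ v, 0 ≤ g v := by
    intro v
    exact Real.iSup_nonneg fun i => Vnonneg _
  have hg_ge : ∀ (v : S → EuclideanSpace ℝ (Fin n)) i, V (a i + v i) ≤ g v := fun v i =>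
    le_ciSup (hbdd v) i
  -- constant  C0 = max_i V(A_i x)
  set C0 : ℝ := ⨆ i : S, V (a i) with hC0def
  have hC0ge : ∀ i : S, V (a i) ≤ C0 :=
    fun i => le_ciSup (f := fun j : S => V (a j)) (Set.Finite.bddAbove (Set.finite_range _)) i
  -- the compact set T
  set R : ℝ := (g 0 + C0) / c with hRdef
  set T : Set (S → EuclideanSpace ℝ (Fin n)) :=
    {v | v ∈ LinearMap.range L ∧ g v ≤ g 0} with hTdef
  have hT0 : (0 : S → EuclideanSpace ℝ (Fin n)) ∈ T := by
    refine ⟨⟨0, map_zero L⟩, le_refl _⟩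
  have hTclosed : IsClosed T := by
    have h1 : IsClosed ((LinearMap.range L : Submodule ℝ (S → EuclideanSpace ℝ (Fin n))) : Set (S → EuclideanSpace ℝ (Fin n))) :=
      Submodule.closed_of_finiteDimensional (LinearMap.range L)
    have h2 : IsClosed {v | g v ≤ g 0} := isClosed_le hgcont continuous_const
    exact h1.inter h2
  have hTsub : T ⊆ Metric.closedBall 0 R := by
    intro v ⟨_, hv⟩
    rw [Metric.mem_closedBall, dist_zero_right]
    have hnorm : ∀ i : S, ‖v i‖ ≤ R := by
      intro i
      have h1 : V (v i) ≤ V (a i + v i) + V (a i) := by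
        have h := hadd (a i + v i) (-(a i))
        rw [Vneg] at h
        simpa using h
      have h2 : c * ‖v i‖ ≤ g 0 + C0 := by
        have := hc (v i)
        have := hg_ge v i
        have := hC0ge i
        linarith
      rw [hRdef, le_div_iff₀ hc0]
      linarith [h2]
    exact pi_norm_le_iff_of_nonneg (by
      have := hnorm (Classical.arbitrary S)
      exact le_trans (norm_nonneg _) this) |>.mpr hnorm
  have hTcompact : IsCompact T :=
    (isCompact_closedBall 0 R).of_isClosed_subset hTclosed hTsub
  -- minimize g on T
  obtain ⟨vstar, hvT, hvmin⟩ := hTcompact.exists_isMinOn ⟨0, hT0⟩ hgcont.continuousOn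
  obtain ⟨⟨ustar, hustar⟩, hvle⟩ := hvT
  refine ⟨ustar, ?_⟩
  have key : ∀ u : EuclideanSpace ℝ (Fin m), g (L ustar) ≤ g (L u) := by
    intro u
    rw [hustar]
    rcases le_or_gt (g (L u)) (g 0) with h | h
    · exact hvmin ⟨⟨u, rfl⟩, h⟩
    · exact le_trans (hvmin hT0) h.le
  simp only [hgW] at key
  refine le_antisymm (le_ciInf key) (ciInf_le ⟨0, ?_⟩ ustar)
  rintro r ⟨u, rfl⟩
  exact hg_nonneg (L u)
end
end
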